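/- Let m and n be integers with 3 ≤ m ≤ n and set u = m+n-2. Then α(m,n) = C(u/2, (m-1)/2) if m and n are both odd; α(m,n) = C((u-1)/2, (m-2)/2) if m is even and n is odd; α(m,n) = C((u-1)/2, (m-1)/2) if m is odd and n is even; and α(m,n) = 0 if m and n are both even. Here C(a,b) denotes the binomial coefficient. -/

import Mathlib

open Polynomial Finset UniqueFactorizationMonoid

/-- `alpha m u` is the number of monic real polynomials of degree `m-1` dividing `y^u + 1`. -/
noncomputable def alpha (m u : ℕ) : ℕ :=
  Set.ncard {h : Polynomial ℝ | h.Monic ∧ h.natDegree = m - 1 ∧ h ∣ (Polynomial.X ^ u + 1)}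

namespace AlphaProof

lemma monic_of_mem_nf {p f : ℝ[X]} (hf : f ∈ normalizedFactors p) : f.Monic := by
  classical
  have h1 := normalize_normalized_factor f hf
  have h2 : f ≠ 0 := (irreducible_of_normalized_factor f hf).ne_zero
  have := Polynomial.monic_normalize (p := f) h2
  rwa [h1] at this

lemma monic_msprod {t : Multiset ℝ[X]} (h : ∀ f ∈ t, f.Monic) : t.prod.Monic := by
  have := monic_multiset_prod_of_monic t id h
  simpa using this

lemma finset_prod_eq_val_prod (t : Finset ℝ[X]) : (∏ f ∈ t, f) = t.val.prod := by
  rw [Finset.prod_eq_multiset_prod, Multiset.map_id']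

lemma alpha_eq_card {p : ℝ[X]} (hp : p.Monic) (hsf : Squarefree p) (d : ℕ) :
    {h : ℝ[X] | h.Monic ∧ h.natDegree = d ∧ h ∣ p}.ncard =
      ((normalizedFactors p).toFinset.powerset.filter
        (fun t => ∑ f ∈ t, f.natDegree = d)).card := by
  classical
  set F := normalizedFactors p with hF
  set S := F.toFinset with hS
  have hp0 : p ≠ 0 := hp.ne_zero
  have hnodup : F.Nodup := (squarefree_iff_nodup_normalizedFactors hp0).mp hsf
  have hmem : ∀ f ∈ S, f ∈ F := fun f hf => Multiset.mem_toFinset.mp hf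
  have hprodmonic : ∀ t : Finset ℝ[X], t ⊆ S → (∏ f ∈ t, f).Monic := by
    intro t ht
    exact monic_prod_of_monic _ _ (fun f hf => monic_of_mem_nf (hmem f (ht hf)))
  have hproddvd : ∀ t : Finset ℝ[X], t ⊆ S → (∏ f ∈ t, f) ∣ p := by
    intro t ht
    have hle : t.val ≤ F := by
      rw [Multiset.le_iff_subset t.nodup]
      intro x hx
      exact hmem x (ht hx)
    rw [finset_prod_eq_val_prod]
    exact (Multiset.prod_dvd_prod_of_le hle).trans (prod_normalizedFactors hp0).dvd
  have hproddeg : ∀ t : Finset ℝ[X], t ⊆ S →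
      (∏ f ∈ t, f).natDegree = ∑ f ∈ t, f.natDegree := by
    intro t ht
    exact natDegree_prod _ _ (fun f hf => (monic_of_mem_nf (hmem f (ht hf))).ne_zero)
  have hnf : ∀ t : Finset ℝ[X], t ⊆ S → normalizedFactors (∏ f ∈ t, f) = t.val := by
    intro t ht
    rw [finset_prod_eq_val_prod,
      normalizedFactors_prod_eq _ (fun f hf => irreducible_of_normalized_factor f (hmem f (ht hf))),
      Multiset.map_congr rfl (fun f hf => normalize_normalized_factor f (hmem f (ht hf))),
      Multiset.map_id']
  have hseteq : {h : ℝ[X] | h.Monic ∧ h.natDegree = d ∧ h ∣ p} =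
      ↑((S.powerset.filter (fun t => ∑ f ∈ t, f.natDegree = d)).image
        (fun t => ∏ f ∈ t, f)) := by
    ext h
    simp only [Set.mem_setOf_eq, coe_image, Set.mem_image, mem_coe, mem_filter, mem_powerset]
    constructor
    · rintro ⟨hmon, hdeg, hdvd⟩
      have h0 : h ≠ 0 := hmon.ne_zero
      have hhsf : Squarefree h := hsf.squarefree_of_dvd hdvd
      have hhnodup : (normalizedFactors h).Nodup :=
        (squarefree_iff_nodup_normalizedFactors h0).mp hhsf
      have hle : normalizedFactors h ≤ F :=
        (dvd_iff_normalizedFactors_le_normalizedFactors h0 hp0).mp hdvd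
      have hsub : (normalizedFactors h).toFinset ⊆ S := by
        intro x hx
        exact Multiset.mem_toFinset.mpr (Multiset.mem_of_le hle (Multiset.mem_toFinset.mp hx))
      have hval : (normalizedFactors h).toFinset.val = normalizedFactors h :=
        Multiset.Nodup.dedup hhnodup
      have hprod : (∏ f ∈ (normalizedFactors h).toFinset, f) = h := by
        rw [finset_prod_eq_val_prod, hval]
        exact eq_of_monic_of_associated
          (monic_msprod (fun f hf => monic_of_mem_nf hf)) hmon
          (prod_normalizedFactors h0)
      refine ⟨(normalizedFactors h).toFinset, ⟨hsub, ?_⟩, hprod⟩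
      have h2 := hproddeg _ hsub
      rw [hprod, hdeg] at h2
      exact h2.symm
    · rintro ⟨t, ⟨hts, hsum⟩, rfl⟩
      exact ⟨hprodmonic t hts, by rw [hproddeg t hts, hsum], hproddvd t hts⟩
  rw [hseteq, Set.ncard_coe_finset]
  apply Finset.card_image_of_injOn
  intro t1 h1 t2 h2 heq
  have ht1 : t1 ⊆ S := mem_powerset.mp (mem_filter.mp h1).1
  have ht2 : t2 ⊆ S := mem_powerset.mp (mem_filter.mp h2).1
  have hv := hnf t1 ht1
  rw [show (∏ f ∈ t1, f) = (∏ f ∈ t2, f) from heq, hnf t2 ht2] at hv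
  exact Finset.val_injective hv.symm


lemma countA (S : Finset ℝ[X]) (hS : ∀ f ∈ S, f.natDegree = 2) (d : ℕ) :
    (S.powerset.filter (fun t => ∑ f ∈ t, f.natDegree = d)).card =
      if d % 2 = 0 then S.card.choose (d / 2) else 0 := by
  classical
  have hsum : ∀ t ∈ S.powerset, (∑ f ∈ t, f.natDegree) = 2 * t.card := by
    intro t ht
    rw [Finset.sum_congr rfl (fun f hf => hS f (mem_powerset.mp ht hf)),
      Finset.sum_const, smul_eq_mul, mul_comm]
  by_cases hd : d % 2 = 0
  · rw [if_pos hd]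
    have : S.powerset.filter (fun t => ∑ f ∈ t, f.natDegree = d) =
        S.powerset.filter (fun t => t.card = d / 2) := by
      apply filter_congr
      intro t ht
      rw [hsum t ht]
      constructor
      · intro h; omega
      · intro h; omega
    rw [this, ← powersetCard_eq_filter, card_powersetCard]
  · rw [if_neg hd]
    rw [Finset.card_eq_zero, Finset.filter_eq_empty_iff]
    intro t ht h
    rw [hsum t ht] at h
    omega

lemma countB (S : Finset ℝ[X]) (a : ℝ[X]) (ha : a ∉ S) (hda : a.natDegree = 1)
    (hS : ∀ f ∈ S, f.natDegree = 2) (d : ℕ) :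
    ((insert a S).powerset.filter (fun t => ∑ f ∈ t, f.natDegree = d)).card =
      if d % 2 = 0 then S.card.choose (d / 2) else S.card.choose ((d - 1) / 2) := by
  classical
  rw [powerset_insert, filter_union]
  have hdisj : Disjoint (S.powerset.filter (fun t => ∑ f ∈ t, f.natDegree = d))
      ((S.powerset.image (insert a)).filter (fun t => ∑ f ∈ t, f.natDegree = d)) := by
    rw [Finset.disjoint_left]
    intro t ht1 ht2
    have h1 : t ⊆ S := mem_powerset.mp (mem_filter.mp ht1).1
    obtain ⟨s, hs, rfl⟩ := Finset.mem_image.mp (mem_filter.mp ht2).1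
    exact ha (h1 (mem_insert_self a s))
  rw [card_union_of_disjoint hdisj, countA S hS d]
  have hinj : Set.InjOn (insert a) (S.powerset : Set (Finset ℝ[X])) := by
    intro s1 h1 s2 h2 heq
    have ha1 : a ∉ s1 := fun h => ha (mem_powerset.mp h1 h)
    have ha2 : a ∉ s2 := fun h => ha (mem_powerset.mp h2 h)
    rw [← Finset.erase_insert ha1, ← Finset.erase_insert ha2, heq]
  have himg : (S.powerset.image (insert a)).filter (fun t => ∑ f ∈ t, f.natDegree = d) =
      (S.powerset.filter (fun s => ∑ f ∈ insert a s, f.natDegree = d)).image (insert a) := by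
    rw [Finset.filter_image]
  rw [himg, Finset.card_image_of_injOn (hinj.mono (by intro x hx; exact mem_coe.mpr (mem_filter.mp hx).1))]
  have hsum2 : ∀ s ∈ S.powerset, (∑ f ∈ insert a s, f.natDegree) = 1 + 2 * s.card := by
    intro s hs
    have has : a ∉ s := fun h => ha (mem_powerset.mp hs h)
    rw [Finset.sum_insert has, hda,
      Finset.sum_congr rfl (fun f hf => hS f (mem_powerset.mp hs hf)),
      Finset.sum_const, smul_eq_mul, mul_comm]
  by_cases hd : d % 2 = 0
  · rw [if_pos hd, if_pos hd]
    have : S.powerset.filter (fun s => ∑ f ∈ insert a s, f.natDegree = d) = ∅ := by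
      rw [Finset.filter_eq_empty_iff]
      intro s hs h
      rw [hsum2 s hs] at h
      omega
    rw [this]
    simp
  · rw [if_neg hd, if_neg hd]
    have : S.powerset.filter (fun s => ∑ f ∈ insert a s, f.natDegree = d) =
        S.powerset.filter (fun s => s.card = (d - 1) / 2) := by
      apply filter_congr
      intro s hs
      rw [hsum2 s hs]
      constructor
      · intro h; omega
      · intro h; omega
    rw [this, ← powersetCard_eq_filter, card_powersetCard]
    simp


variable {u : ℕ}

lemma monic_p (hu : u ≠ 0) : (X ^ u + 1 : ℝ[X]).Monic := by
  simpa using monic_X_pow_add_C (1 : ℝ) hu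

lemma natDegree_p (hu : u ≠ 0) : (X ^ u + 1 : ℝ[X]).natDegree = u := by
  have : (X ^ u + 1 : ℝ[X]) = X ^ u + C 1 := by simp
  rw [this, natDegree_X_pow_add_C]

lemma sf_p (hu : u ≠ 0) : Squarefree (X ^ u + 1 : ℝ[X]) := by
  have h : (X ^ u + 1 : ℝ[X]) = X ^ u - C (-1 : ℝ) := by
    simp [sub_neg_eq_add]
  rw [h]
  exact (separable_X_pow_sub_C (-1 : ℝ) (Nat.cast_ne_zero.mpr hu) (by norm_num)).squarefree

lemma deg_factor_mem {f : ℝ[X]} (hu : u ≠ 0)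
    (hf : f ∈ normalizedFactors (X ^ u + 1 : ℝ[X])) :
    f.natDegree = 1 ∨ f.natDegree = 2 := by
  classical
  have hirr : Irreducible f := irreducible_of_normalized_factor f hf
  have h2 : f.natDegree ≤ 2 := hirr.natDegree_le_two
  have hmon : f.Monic := by
    have h1 := normalize_normalized_factor f hf
    have := Polynomial.monic_normalize (p := f) hirr.ne_zero
    rwa [h1] at this
  have h1 : f.natDegree ≠ 0 := by
    intro h
    exact hirr.not_isUnit (by rw [hmon.natDegree_eq_zero.mp h]; exact isUnit_one)
  omega

lemma linear_factor_eq {f : ℝ[X]} (hu : u ≠ 0) (hmon : f.Monic) (hd : f.natDegree = 1)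
    (hdvd : f ∣ (X ^ u + 1 : ℝ[X])) : Odd u ∧ f = X + 1 := by
  obtain ⟨g, hg⟩ := hdvd
  have hf : f = X + C (f.coeff 0) := hmon.eq_X_add_C hd
  set c := f.coeff 0
  have hroot : ((-c) ^ u + 1 : ℝ) = 0 := by
    have := congrArg (Polynomial.eval (-c)) hg
    simp [hf] at this
    simpa using this
  have hodd : Odd u := by
    rcases Nat.even_or_odd u with he | ho
    · exfalso
      have : (0:ℝ) ≤ (-c) ^ u := he.pow_nonneg _
      nlinarith
    · exact ho
  have hc : c = 1 := by
    have h1 : (-c) ^ u = -(c ^ u) := hodd.neg_pow c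
    have h2 : c ^ u = 1 := by nlinarith [hroot, h1]
    have h3 : c ^ u = 1 ^ u := by rw [h2, one_pow]
    exact (Odd.strictMono_pow (R := ℝ) hodd).injective h3
  refine ⟨hodd, by rw [hf, hc, map_one]⟩

lemma X_add_one_mem (hodd : Odd u) :
    (X + 1 : ℝ[X]) ∈ normalizedFactors (X ^ u + 1 : ℝ[X]) := by
  classical
  have hu : u ≠ 0 := by rintro rfl; simp [Nat.odd_iff] at hodd
  have hdvd : (X + 1 : ℝ[X]) ∣ (X ^ u + 1) := by
    have h1 : (X + 1 : ℝ[X]) = X - C (-1 : ℝ) := by simp [sub_neg_eq_add]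
    rw [h1]
    refine dvd_iff_isRoot.mpr ?_
    simp [IsRoot, hodd.neg_one_pow]
  have hirr : Irreducible (X + 1 : ℝ[X]) := by
    have h1 : (X + 1 : ℝ[X]) = X - C (-1 : ℝ) := by simp [sub_neg_eq_add]
    rw [h1]; exact irreducible_X_sub_C _
  have hne : (X ^ u + 1 : ℝ[X]) ≠ 0 := (monic_p hu).ne_zero
  have hle := (dvd_iff_normalizedFactors_le_normalizedFactors
    (hirr.ne_zero) hne).mp hdvd
  have hmono : (X + 1 : ℝ[X]).Monic := by simpa using monic_X_pow_add_C (1:ℝ) one_ne_zero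
  rw [normalizedFactors_irreducible hirr, hmono.normalize_eq_self] at hle
  exact Multiset.mem_of_le hle (Multiset.mem_singleton_self _)


lemma alpha_formula (m u : ℕ) (hu : 1 ≤ u) :
    alpha m u = if u % 2 = 0 then
        (if (m - 1) % 2 = 0 then (u / 2).choose ((m - 1) / 2) else 0)
      else
        (if (m - 1) % 2 = 0 then ((u - 1) / 2).choose ((m - 1) / 2)
          else ((u - 1) / 2).choose ((m - 2) / 2)) := by
  classical
  have hu0 : u ≠ 0 := by omega
  have hmon := monic_p hu0
  have hsf := sf_p hu0
  set d := m - 1 with hd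
  set F := normalizedFactors (X ^ u + 1 : ℝ[X]) with hF
  set S := F.toFinset with hS
  have halpha : alpha m u = (S.powerset.filter (fun t => ∑ f ∈ t, f.natDegree = d)).card :=
    alpha_eq_card hmon hsf d
  have hnodup : F.Nodup := (squarefree_iff_nodup_normalizedFactors hmon.ne_zero).mp hsf
  have hval : S.val = F := Multiset.Nodup.dedup hnodup
  have hsumS : ∑ f ∈ S, f.natDegree = u := by
    have h1 : ∑ f ∈ S, f.natDegree = (F.map natDegree).sum := by
      rw [← hval]; rfl
    have h2 : F.prod = X ^ u + 1 := eq_of_monic_of_associated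
      (monic_msprod (fun f hf => monic_of_mem_nf hf)) hmon
      (prod_normalizedFactors hmon.ne_zero)
    rw [h1, ← natDegree_multiset_prod_of_monic _ (fun f hf => monic_of_mem_nf hf), h2,
      natDegree_p hu0]
  have hmemS : ∀ f ∈ S, f ∈ F := fun f hf => Multiset.mem_toFinset.mp hf
  rcases Nat.even_or_odd u with he | ho
  · -- u even : all factors quadratic
    have hall : ∀ f ∈ S, f.natDegree = 2 := by
      intro f hf
      rcases deg_factor_mem hu0 (hmemS f hf) with h1 | h2
      · exfalso
        have := linear_factor_eq hu0 (monic_of_mem_nf (hmemS f hf)) h1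
          (dvd_of_mem_normalizedFactors (hmemS f hf))
        rw [Nat.odd_iff] at this
        rw [Nat.even_iff] at he
        omega
      · exact h2
    have hcard : S.card = u / 2 := by
      have : ∑ f ∈ S, f.natDegree = 2 * S.card := by
        rw [Finset.sum_congr rfl hall, Finset.sum_const, smul_eq_mul, mul_comm]
      rw [this] at hsumS
      omega
    rw [halpha, countA S hall d, hcard]
    rw [Nat.even_iff] at he
    rw [if_pos he]
  · -- u odd
    have ha : (X + 1 : ℝ[X]) ∈ S := Multiset.mem_toFinset.mpr (X_add_one_mem ho)
    set S' := S.erase (X + 1 : ℝ[X]) with hS'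
    have hins : insert (X + 1 : ℝ[X]) S' = S := Finset.insert_erase ha
    have hnotmem : (X + 1 : ℝ[X]) ∉ S' := Finset.notMem_erase _ _
    have hall' : ∀ f ∈ S', f.natDegree = 2 := by
      intro f hf
      have hfS : f ∈ S := Finset.mem_of_mem_erase hf
      rcases deg_factor_mem hu0 (hmemS f hfS) with h1 | h2
      · exfalso
        have heq := (linear_factor_eq hu0 (monic_of_mem_nf (hmemS f hfS)) h1
          (dvd_of_mem_normalizedFactors (hmemS f hfS))).2
        exact (Finset.ne_of_mem_erase hf) heq
      · exact h2
    have hdX : (X + 1 : ℝ[X]).natDegree = 1 := by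
      have : (X + 1 : ℝ[X]) = X + C 1 := by simp
      rw [this]; exact natDegree_X_add_C _
    have hcard : S'.card = (u - 1) / 2 := by
      have h3 : ∑ f ∈ S, f.natDegree = 1 + 2 * S'.card := by
        rw [← hins, Finset.sum_insert hnotmem, hdX,
          Finset.sum_congr rfl hall', Finset.sum_const, smul_eq_mul, mul_comm]
      rw [h3] at hsumS
      rw [Nat.odd_iff] at ho
      omega
    have hcount := countB S' (X + 1 : ℝ[X]) hnotmem hdX hall' d
    rw [hins] at hcount
    rw [halpha, hcount, hcard]
    rw [Nat.odd_iff] at ho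
    rw [if_neg (show ¬ u % 2 = 0 by omega)]
    by_cases hdp : d % 2 = 0
    · rw [if_pos hdp, if_pos hdp]
    · rw [if_neg hdp, if_neg hdp, show d - 1 = m - 2 by omega]


end AlphaProof

theorem stmt2 (m n u : ℕ) (hm : 3 ≤ m) (hmn : m ≤ n) (hu : u = m + n - 2) :
    (Odd m → Odd n → alpha m u = Nat.choose (u / 2) ((m - 1) / 2)) ∧
    (Even m → Odd n → alpha m u = Nat.choose ((u - 1) / 2) ((m - 2) / 2)) ∧
    (Odd m → Even n → alpha m u = Nat.choose ((u - 1) / 2) ((m - 1) / 2)) ∧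
    (Even m → Even n → alpha m u = 0) := by
  have hu1 : 1 ≤ u := by omega
  have hf := AlphaProof.alpha_formula m u hu1
  refine ⟨fun h1 h2 => ?_, fun h1 h2 => ?_, fun h1 h2 => ?_, fun h1 h2 => ?_⟩
  · rw [Nat.odd_iff] at h1 h2
    rw [hf, if_pos (by omega), if_pos (by omega)]
  · rw [Nat.even_iff] at h1; rw [Nat.odd_iff] at h2
    rw [hf, if_neg (by omega), if_neg (by omega)]
  · rw [Nat.odd_iff] at h1; rw [Nat.even_iff] at h2
    rw [hf, if_neg (by omega), if_pos (by omega)]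
  · rw [Nat.even_iff] at h1 h2
    rw [hf, if_pos (by omega), if_neg (by omega)]
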